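/- Let G be a simple graph with n ≥ 3 vertices and m edges with m/(n−1) ≥ 3, set s = ⌊m/(n−1)⌋ and α = m/(n−1) − s, and let v be a vertex of G of maximum degree Δ(G). Then the number of cycles of G that contain v is at most (Δ(G)/2)·(s^{1−α}(s+1)^{α})^{n−1}. -/

import Mathlib

/-- A subgraph of a simple graph is a cycle subgraph if it is connected (hence nonempty)
and every one of its vertices has exactly two neighbours in it. -/
def SimpleGraph.Subgraph.IsCycleSub {V : Type*} {G : SimpleGraph V} (H : G.Subgraph) : Prop :=
  H.coe.Connected ∧ ∀ v ∈ H.verts, (H.neighborSet v).ncard = 2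

/-- `C(G)`: the number of cycles in a simple graph `G`, i.e. the number of distinct
subgraphs of `G` that are cycles. -/
noncomputable def SimpleGraph.cycleCount {V : Type*} (G : SimpleGraph V) : ℕ :=
  {H : G.Subgraph | H.IsCycleSub}.ncard

/-- `C(m)`: the maximum number of cycles in a simple graph with `m` edges. -/
noncomputable def maxCycles (m : ℕ) : ℕ :=
  sSup {c : ℕ | ∃ (n : ℕ) (G : SimpleGraph (Fin n)), G.edgeSet.ncard = m ∧ c = G.cycleCount}


namespace CycAux

variable {s₀ : ℕ}

noncomputable def qv (s₀ : ℕ) : ℝ := ((s₀ : ℝ) + 1) / s₀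

lemma sR_pos (hs₀ : 3 ≤ s₀) : (0:ℝ) < s₀ := by
  have : (0:ℕ) < s₀ := by omega
  exact_mod_cast this

lemma qv_pos (hs₀ : 3 ≤ s₀) : 0 < qv s₀ := by
  have h := sR_pos hs₀
  unfold qv; positivity

lemma one_le_qv (hs₀ : 3 ≤ s₀) : 1 ≤ qv s₀ := by
  have h := sR_pos hs₀
  rw [qv, le_div_iff₀ h]; linarith

lemma qv_pow_le (hs₀ : 3 ≤ s₀) : (qv s₀) ^ s₀ ≤ (s₀ : ℝ) := by
  have h := sR_pos hs₀
  have h1 : qv s₀ = 1 + 1 / s₀ := by rw [qv]; field_simp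
  have h2 : qv s₀ ≤ Real.exp (1 / s₀) := by
    rw [h1]; have := Real.add_one_le_exp (1 / (s₀:ℝ)); linarith
  have h3 : (qv s₀) ^ s₀ ≤ Real.exp (1 / s₀) ^ s₀ := by
    apply pow_le_pow_left₀ (le_of_lt (qv_pos hs₀)) h2
  have h4 : Real.exp (1 / (s₀:ℝ)) ^ s₀ = Real.exp ((s₀ : ℝ) * (1 / s₀)) := by
    rw [← Real.exp_nat_mul]
  have h5 : (s₀ : ℝ) * (1 / s₀) = 1 := by field_simp
  have h6 : Real.exp 1 < 3 := lt_trans Real.exp_one_lt_d9 (by norm_num)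
  have h7 : (3:ℝ) ≤ s₀ := by exact_mod_cast hs₀
  calc (qv s₀) ^ s₀ ≤ Real.exp ((s₀:ℝ) * (1/s₀)) := by rw [← h4]; exact h3
    _ = Real.exp 1 := by rw [h5]
    _ ≤ (s₀:ℝ) := by linarith

-- pointwise: (d:ℝ) ≤ s₀ * qv^(d - s₀)  for d ≥ 1 integer
lemma aux_low (hs₀ : 3 ≤ s₀) : ∀ t d : ℕ, d + t ≤ s₀ → (d : ℝ) * (qv s₀) ^ t ≤ (s₀ : ℝ) := by
  intro t
  induction t with
  | zero => intro d hd; simpa using (by exact_mod_cast (by omega : d ≤ s₀) : (d:ℝ) ≤ s₀)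
  | succ t ih =>
    intro d hd
    have h := sR_pos hs₀
    have h1 : (d : ℝ) * qv s₀ ≤ (d : ℝ) + 1 := by
      rw [qv, mul_div_assoc', div_le_iff₀ h]
      have : (d:ℝ) ≤ s₀ := by exact_mod_cast (by omega : d ≤ s₀)
      nlinarith
    have h2 : ((d:ℝ)+1) * (qv s₀)^t ≤ s₀ := by
      have := ih (d+1) (by omega); push_cast at this ⊢; linarith
    have hq : 0 ≤ (qv s₀)^t := le_of_lt (pow_pos (qv_pos hs₀) t)
    calc (d:ℝ) * (qv s₀)^(t+1) = ((d:ℝ) * qv s₀) * (qv s₀)^t := by ring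
      _ ≤ ((d:ℝ)+1) * (qv s₀)^t := by apply mul_le_mul_of_nonneg_right h1 hq
      _ ≤ s₀ := h2

lemma pointwise (hs₀ : 3 ≤ s₀) (d : ℕ) (hd : 1 ≤ d) :
    (d : ℝ) ≤ (s₀ : ℝ) * (qv s₀) ^ ((d : ℤ) - s₀) := by
  have hq := qv_pos hs₀
  have h := sR_pos hs₀
  rcases le_or_gt s₀ d with hc | hc
  · -- d ≥ s₀ : Bernoulli
    obtain ⟨t, rfl⟩ : ∃ t, d = s₀ + t := ⟨d - s₀, by omega⟩
    have he : ((s₀ + t : ℕ) : ℤ) - s₀ = (t : ℤ) := by push_cast; ring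
    rw [he, zpow_natCast]
    have h1 : qv s₀ = 1 + 1 / s₀ := by rw [qv]; field_simp
    have hb : 1 + (t : ℝ) * (1 / s₀) ≤ (1 + 1 / (s₀:ℝ)) ^ t := by
      apply one_add_mul_le_pow
      have : (0:ℝ) ≤ 1 / s₀ := by positivity
      linarith
    have : (s₀:ℝ) * (1 + (t:ℝ) * (1/s₀)) = s₀ + t := by field_simp
    calc ((s₀ + t : ℕ) : ℝ) = (s₀:ℝ) + t := by push_cast; ring
      _ = (s₀:ℝ) * (1 + (t:ℝ)*(1/s₀)) := by rw [this]
      _ ≤ (s₀:ℝ) * (qv s₀)^t := by rw [h1]; exact mul_le_mul_of_nonneg_left hb (le_of_lt h)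
  · -- d < s₀
    obtain ⟨t, ht⟩ : ∃ t, s₀ = d + t := ⟨s₀ - d, by omega⟩
    have he : (d : ℤ) - s₀ = -(t : ℤ) := by omega
    rw [he, zpow_neg, zpow_natCast]
    have key : (d : ℝ) * (qv s₀)^t ≤ s₀ := aux_low hs₀ t d (by omega)
    have hqt : 0 < (qv s₀)^t := pow_pos hq t
    rw [le_mul_inv_iff₀ hqt]
    exact key


noncomputable def Tb (s₀ k Q : ℕ) : ℝ := (s₀ : ℝ) ^ k * (qv s₀) ^ ((Q : ℤ) - k * s₀)

lemma Tb_pos (hs₀ : 3 ≤ s₀) (k Q : ℕ) : 0 < Tb s₀ k Q := by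
  have h := sR_pos hs₀; have hq := qv_pos hs₀
  unfold Tb; positivity

lemma one_le_Tb (hs₀ : 3 ≤ s₀) (k Q : ℕ) : 1 ≤ Tb s₀ k Q := by
  have h := sR_pos hs₀; have hq := qv_pos hs₀; have hq1 := one_le_qv hs₀
  have key : Tb s₀ k Q = ((s₀:ℝ) * (qv s₀) ^ (-(s₀:ℤ))) ^ k * (qv s₀) ^ (Q:ℤ) := by
    unfold Tb
    rw [mul_pow, ← zpow_natCast (qv s₀ ^ (-(s₀:ℤ))) k, ← zpow_mul]
    rw [mul_assoc, ← zpow_add₀ (ne_of_gt hq)]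
    congr 1
    ring
  rw [key]
  have h1 : 1 ≤ (s₀:ℝ) * (qv s₀) ^ (-(s₀:ℤ)) := by
    rw [zpow_neg, zpow_natCast, ← div_eq_mul_inv, le_div_iff₀ (pow_pos hq _), one_mul]
    exact qv_pow_le hs₀
  have h2 : 1 ≤ (qv s₀) ^ (Q:ℤ) := one_le_zpow₀ hq1 (by positivity)
  have h3 : 1 ≤ ((s₀:ℝ) * (qv s₀) ^ (-(s₀:ℤ))) ^ k := by
    calc (1:ℝ) = 1 ^ k := (one_pow k).symm
      _ ≤ _ := pow_le_pow_left₀ (by norm_num) h1 k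
  nlinarith [h2, h3]

lemma Tb_mono (hs₀ : 3 ≤ s₀) (k : ℕ) {Q Q' : ℕ} (h : Q ≤ Q') : Tb s₀ k Q ≤ Tb s₀ k Q' := by
  have hq1 := one_le_qv hs₀
  unfold Tb
  apply mul_le_mul_of_nonneg_left _ (by positivity)
  apply zpow_le_zpow_right₀ hq1
  omega

lemma Tb_step (hs₀ : 3 ≤ s₀) (k : ℕ) {d Q : ℕ} (hd : 1 ≤ d) (hdQ : d ≤ Q) :
    (d : ℝ) * Tb s₀ k (Q - d) ≤ Tb s₀ (k+1) Q := by
  have h := sR_pos hs₀; have hq := qv_pos hs₀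
  have hcast : ((Q - d : ℕ) : ℤ) = (Q : ℤ) - d := by omega
  have hp := pointwise hs₀ d hd
  unfold Tb
  rw [hcast]
  have expand : ((s₀:ℝ) * (qv s₀) ^ ((d:ℤ) - s₀)) * ((s₀:ℝ)^k * (qv s₀) ^ ((Q:ℤ) - d - k * s₀))
      = (s₀:ℝ)^(k+1) * (qv s₀) ^ ((Q:ℤ) - (k+1) * s₀) := by
    have he : ((Q:ℤ) - d - k * s₀) + ((d:ℤ) - s₀) = (Q:ℤ) - (k+1) * s₀ := by ring
    rw [← he, zpow_add₀ (ne_of_gt hq)]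
    ring
  calc (d:ℝ) * ((s₀:ℝ)^k * (qv s₀) ^ ((Q:ℤ) - d - k * s₀))
      ≤ ((s₀:ℝ) * (qv s₀) ^ ((d:ℤ) - s₀)) * ((s₀:ℝ)^k * (qv s₀) ^ ((Q:ℤ) - d - k * s₀)) := by
        apply mul_le_mul_of_nonneg_right hp; positivity
    _ = (s₀:ℝ)^(k+1) * (qv s₀) ^ ((Q:ℤ) - (k+1) * s₀) := expand


section Counting

variable {V : Type*} [Fintype V] [DecidableEq V] (G : SimpleGraph V) [DecidableRel G.Adj] (v : V)

/-- Finset of candidate path-lists: lists `[c₁,...,c_{t-1}, v]` of length ≤ k starting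
adjacent to `x`, with non-`v` entries drawn without repetition from `A`. -/
def Wl : ℕ → V → Finset V → Finset (List V)
  | 0, _, _ => ∅
  | (k+1), x, A => (if G.Adj x v then {[v]} else ∅) ∪
      (A.filter (G.Adj x)).biUnion (fun z => (Wl k z (A.erase z)).image (List.cons z))

/-- edge budget -/
def Fe (x : V) (A : Finset V) : Finset (Sym2 V) :=
  G.edgeFinset.filter (fun e => ∃ a ∈ insert x A, ∃ b ∈ insert v A, e = s(a,b))

def Qe (x : V) (A : Finset V) : ℕ := (Fe G v x A).card

def De (x : V) (A : Finset V) : Finset (Sym2 V) :=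
  ((insert v A).filter (G.Adj x)).image (fun w => s(x,w))

lemma De_card (x : V) (A : Finset V) :
    (De G v x A).card = ((insert v A).filter (G.Adj x)).card := by
  apply Finset.card_image_of_injOn
  intro a ha b hb hab
  simp only [Finset.coe_filter, Set.mem_setOf_eq] at ha hb
  rcases Sym2.eq_iff.mp hab with ⟨_, h2⟩ | ⟨h1, h2⟩
  · exact h2
  · exact absurd h2 (G.ne_of_adj ha.2).symm

lemma De_subset (x : V) (A : Finset V) : De G v x A ⊆ Fe G v x A := by
  intro e he
  simp only [De, Finset.mem_image] at he
  obtain ⟨w, hw, rfl⟩ := he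
  simp only [Finset.mem_filter] at hw
  simp only [Fe, Finset.mem_filter, SimpleGraph.mem_edgeFinset, SimpleGraph.mem_edgeSet]
  exact ⟨hw.2, x, Finset.mem_insert_self x A, w, hw.1, rfl⟩

lemma De_card_le (x : V) (A : Finset V) : ((insert v A).filter (G.Adj x)).card ≤ Qe G v x A := by
  rw [← De_card G v x A]; exact Finset.card_le_card (De_subset G v x A)

lemma Fe_subset_diff {x z : V} {A : Finset V} (hxA : x ∉ A) (hxv : x ≠ v) (hzA : z ∈ A) :
    Fe G v z (A.erase z) ⊆ (Fe G v x A) \ (De G v x A) := by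
  intro e he
  simp only [Fe, Finset.mem_filter] at he
  obtain ⟨hedge, a, ha, b, hb, rfl⟩ := he
  rw [Finset.insert_erase hzA] at ha
  have hbA : b ∈ insert v A := by
    rcases Finset.mem_insert.mp hb with h | h
    · exact h ▸ Finset.mem_insert_self v A
    · exact Finset.mem_insert_of_mem (Finset.mem_of_mem_erase h)
  rw [Finset.mem_sdiff]
  constructor
  · simp only [Fe, Finset.mem_filter]
    exact ⟨hedge, a, Finset.mem_insert_of_mem ha, b, hbA, rfl⟩
  · -- x is not an endpoint
    intro hD
    simp only [De, Finset.mem_image] at hD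
    obtain ⟨w, _, hw⟩ := hD
    have haNx : a ≠ x := fun h => hxA (h ▸ ha)
    have hbNx : b ≠ x := by
      rcases Finset.mem_insert.mp hbA with h | h
      · exact fun hh => hxv (hh ▸ h)
      · exact fun hh => hxA (hh ▸ h)
    rcases Sym2.eq_iff.mp hw with ⟨h1, _⟩ | ⟨h1, _⟩
    · exact haNx h1.symm
    · exact hbNx h1.symm

lemma Qe_budget {x z : V} {A : Finset V} (hxA : x ∉ A) (hxv : x ≠ v) (hzA : z ∈ A) :
    Qe G v z (A.erase z) ≤ Qe G v x A - ((insert v A).filter (G.Adj x)).card := by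
  have h1 := Finset.card_le_card (Fe_subset_diff G v hxA hxv hzA)
  rw [Finset.card_sdiff_of_subset (De_subset G v x A), De_card] at h1
  exact h1

lemma Qe_le (x : V) (A : Finset V) : Qe G v x A ≤ G.edgeFinset.card :=
  Finset.card_le_card (Finset.filter_subset _ _)

/-- Main counting bound. -/
lemma Wl_card_le {s₀ : ℕ} (hs₀ : 3 ≤ s₀) :
    ∀ (k : ℕ) (x : V) (A : Finset V), x ∉ A → x ≠ v → v ∉ A →
    ((Wl G v k x A).card : ℝ) ≤ Tb s₀ k (Qe G v x A) := by
  intro k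
  induction k with
  | zero => intro x A _ _ _; simp [Wl]; exact le_of_lt (Tb_pos hs₀ _ _)
  | succ k ih =>
    intro x A hxA hxv hvA
    set d : ℕ := ((insert v A).filter (G.Adj x)).card with hd
    have hdQ : d ≤ Qe G v x A := De_card_le G v x A
    -- card of the union
    have hsplit : ((Wl G v (k+1) x A).card : ℝ) ≤
        ((if G.Adj x v then 1 else 0) : ℝ) +
          ∑ z ∈ A.filter (G.Adj x), ((Wl G v k z (A.erase z)).card : ℝ) := by
      have h1 : (Wl G v (k+1) x A).card ≤
          (if G.Adj x v then ({[v]} : Finset (List V)) else ∅).card +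
          ((A.filter (G.Adj x)).biUnion (fun z => (Wl G v k z (A.erase z)).image (List.cons z))).card := by
        rw [Wl]; exact Finset.card_union_le _ _
      have h2 : ((A.filter (G.Adj x)).biUnion
            (fun z => (Wl G v k z (A.erase z)).image (List.cons z))).card ≤
          ∑ z ∈ A.filter (G.Adj x), (Wl G v k z (A.erase z)).card := by
        refine le_trans (Finset.card_biUnion_le) ?_
        exact Finset.sum_le_sum (fun z _ => Finset.card_image_le)
      have h3 : (if G.Adj x v then ({[v]} : Finset (List V)) else ∅).card
          = (if G.Adj x v then 1 else 0) := by split <;> simp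
      calc ((Wl G v (k+1) x A).card : ℝ)
          ≤ ((if G.Adj x v then 1 else 0) : ℕ) + (∑ z ∈ A.filter (G.Adj x), (Wl G v k z (A.erase z)).card : ℕ) := by
            exact_mod_cast (h3 ▸ le_trans h1 (Nat.add_le_add_left h2 _))
        _ = _ := by push_cast; split <;> simp
    -- bound each term by Tb s₀ k (Qe x A - d)
    have hterm : ∀ z ∈ A.filter (G.Adj x),
        ((Wl G v k z (A.erase z)).card : ℝ) ≤ Tb s₀ k (Qe G v x A - d) := by
      intro z hz
      rw [Finset.mem_filter] at hz
      have hz1 : z ∉ A.erase z := Finset.notMem_erase z A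
      have hz2 : z ≠ v := fun h => hvA (h ▸ hz.1)
      have hz3 : v ∉ A.erase z := fun h => hvA (Finset.mem_of_mem_erase h)
      refine le_trans (ih z (A.erase z) hz1 hz2 hz3) (Tb_mono hs₀ k ?_)
      exact Qe_budget G v hxA hxv hz.1
    have hcount : ((if G.Adj x v then 1 else 0) : ℝ) +
          ∑ z ∈ A.filter (G.Adj x), ((Wl G v k z (A.erase z)).card : ℝ)
        ≤ (d : ℝ) * Tb s₀ k (Qe G v x A - d) := by
      have hone : 1 ≤ Tb s₀ k (Qe G v x A - d) := one_le_Tb hs₀ _ _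
      have hsum : ∑ z ∈ A.filter (G.Adj x), ((Wl G v k z (A.erase z)).card : ℝ)
          ≤ (A.filter (G.Adj x)).card * Tb s₀ k (Qe G v x A - d) := by
        calc _ ≤ ∑ _z ∈ A.filter (G.Adj x), Tb s₀ k (Qe G v x A - d) :=
              Finset.sum_le_sum hterm
          _ = _ := by rw [Finset.sum_const, nsmul_eq_mul]
      have hdcard : (d : ℝ) = ((if G.Adj x v then 1 else 0) : ℝ) + (A.filter (G.Adj x)).card := by
        rw [hd, Finset.filter_insert]
        split
        · rw [Finset.card_insert_of_notMem (fun h => hvA (Finset.mem_of_mem_filter _ h))]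
          push_cast; ring
        · simp
      rw [hdcard, add_mul]
      have : ((if G.Adj x v then 1 else 0) : ℝ) ≤ ((if G.Adj x v then 1 else 0) : ℝ) * Tb s₀ k (Qe G v x A - d) := by
        split
        · simpa using hone
        · simp
      linarith
    rcases Nat.eq_zero_or_pos d with hd0 | hd1
    · -- d = 0 : everything is empty
      have hxv' : ¬ G.Adj x v := by
        intro h
        have : v ∈ (insert v A).filter (G.Adj x) := by
          rw [Finset.mem_filter]; exact ⟨Finset.mem_insert_self v A, h⟩
        rw [hd0] at hd
        exact absurd (hd ▸ Finset.card_pos.mpr ⟨v, this⟩) (by omega)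
      have hfilter : A.filter (G.Adj x) = ∅ := by
        rw [← Finset.subset_empty]
        intro z hz
        have : z ∈ (insert v A).filter (G.Adj x) := by
          rw [Finset.mem_filter] at hz ⊢
          exact ⟨Finset.mem_insert_of_mem hz.1, hz.2⟩
        rw [hd0] at hd
        exact absurd (hd ▸ Finset.card_pos.mpr ⟨z, this⟩) (by omega)
      rw [Wl, hfilter, if_neg hxv']
      simp
      exact le_of_lt (Tb_pos hs₀ _ _)
    · refine le_trans hsplit (le_trans hcount ?_)
      exact Tb_step hs₀ k hd1 hdQ

/-- membership lemma -/
lemma mem_Wl : ∀ (l' : List V) (k : ℕ) (x : V) (A : Finset V),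
    List.Chain G.Adj x (l' ++ [v]) → l'.Nodup → (∀ a ∈ l', a ∈ A) → l'.length + 1 ≤ k →
    l' ++ [v] ∈ Wl G v k x A := by
  intro l'
  induction l' with
  | nil =>
    intro k x A hchain _ _ hlen
    obtain ⟨k', rfl⟩ : ∃ k', k = k' + 1 := ⟨k - 1, by omega⟩
    simp only [List.nil_append] at hchain ⊢
    unfold List.Chain at hchain; rw [List.chain_cons] at hchain
    rw [Wl, Finset.mem_union]
    left
    rw [if_pos hchain.1]
    simp
  | cons z l'' ih =>
    intro k x A hchain hnodup hmem hlen
    obtain ⟨k', rfl⟩ : ∃ k', k = k' + 1 := ⟨k - 1, by omega⟩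
    simp only [List.Chain, List.cons_append, List.chain_cons] at hchain
    rw [Wl, Finset.mem_union]
    right
    rw [Finset.mem_biUnion]
    refine ⟨z, ?_, ?_⟩
    · rw [Finset.mem_filter]
      exact ⟨hmem z (List.mem_cons_self), hchain.1⟩
    · rw [Finset.mem_image]
      refine ⟨l'' ++ [v], ?_, by simp⟩
      apply ih k' z (A.erase z) hchain.2 (List.Nodup.of_cons hnodup)
      · intro a ha
        rw [Finset.mem_erase]
        refine ⟨?_, hmem a (List.mem_cons_of_mem z ha)⟩
        intro h
        rw [List.nodup_cons] at hnodup
        exact hnodup.1 (h ▸ ha)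
      · simpa using Nat.succ_le_succ_iff.mp hlen

end Counting


section Traverse

lemma pair_eq {V : Type*} {s : Set V} (h2 : s.ncard = 2) {x y : V}
    (hx : x ∈ s) (hy : y ∈ s) (hxy : x ≠ y) : s = {x, y} := by
  obtain ⟨a, b, hab, rfl⟩ := Set.ncard_eq_two.mp h2
  simp only [Set.mem_insert_iff, Set.mem_singleton_iff] at hx hy
  rcases hx with rfl | rfl <;> rcases hy with rfl | rfl
  · exact absurd rfl hxy
  · rfl
  · rw [Set.pair_comm]
  · exact absurd rfl hxy

variable {V : Type*} {G : SimpleGraph V} (H : G.Subgraph) (v u₁ : V)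

noncomputable def other (p c : V) : V := by
  classical exact if h : ∃ w, H.Adj c w ∧ w ≠ p then h.choose else p

noncomputable def sq : ℕ → V × V
  | 0 => (v, u₁)
  | (i+1) => ((sq i).2, other H (sq i).1 (sq i).2)

noncomputable def cs (i : ℕ) : V := (sq H v u₁ i).2

lemma sq_fst (i : ℕ) : (sq H v u₁ (i+1)).1 = cs H v u₁ i := rfl

lemma cs_zero : cs H v u₁ 0 = u₁ := rfl

variable (hdeg : ∀ u ∈ H.verts, (H.neighborSet u).ncard = 2)

include hdeg in
lemma other_spec {p c : V} (hadj : H.Adj c p) :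
    H.Adj c (other H p c) ∧ other H p c ≠ p ∧
      (∀ w, H.Adj c w → w = p ∨ w = other H p c) := by
  have hc : c ∈ H.verts := hadj.fst_mem
  have h2 := hdeg c hc
  obtain ⟨a, b, hab, hset⟩ := Set.ncard_eq_two.mp h2
  have hp : p ∈ H.neighborSet c := hadj
  have hexists : ∃ w, H.Adj c w ∧ w ≠ p := by
    rw [hset] at hp
    simp only [Set.mem_insert_iff, Set.mem_singleton_iff] at hp
    rcases hp with rfl | rfl
    · refine ⟨b, ?_, fun h => hab h.symm⟩
      have : b ∈ H.neighborSet c := by rw [hset]; simp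
      exact this
    · refine ⟨a, ?_, fun h => hab h⟩
      have : a ∈ H.neighborSet c := by rw [hset]; simp
      exact this
  have hdef : other H p c = hexists.choose := by
    rw [other]; simp only [dif_pos hexists]
  have hspec := hexists.choose_spec
  rw [← hdef] at hspec
  refine ⟨hspec.1, hspec.2, ?_⟩
  intro w hw
  have hwmem : w ∈ H.neighborSet c := hw
  have homem : other H p c ∈ H.neighborSet c := hspec.1
  rw [hset] at hp hwmem homem
  simp only [Set.mem_insert_iff, Set.mem_singleton_iff] at hp hwmem homem
  rcases hp with rfl | rfl
  · rcases homem with h | rfl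
    · exact absurd h hspec.2
    · tauto
  · rcases homem with rfl | h
    · tauto
    · exact absurd h hspec.2

include hdeg in
lemma sq_adj (h1 : H.Adj v u₁) : ∀ i, H.Adj (sq H v u₁ i).1 (sq H v u₁ i).2 := by
  intro i
  induction i with
  | zero => exact h1
  | succ i ih =>
    show H.Adj (sq H v u₁ i).2 (other H (sq H v u₁ i).1 (sq H v u₁ i).2)
    exact (other_spec H hdeg ih.symm).1

include hdeg in
lemma cs_adj (h1 : H.Adj v u₁) (i : ℕ) : H.Adj (cs H v u₁ i) (cs H v u₁ (i+1)) :=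
  sq_adj H v u₁ hdeg h1 (i+1)

include hdeg in
lemma cs_succ_ne (h1 : H.Adj v u₁) (i : ℕ) : cs H v u₁ (i+1) ≠ (sq H v u₁ i).1 :=
  (other_spec H hdeg (sq_adj H v u₁ hdeg h1 i).symm).2.1

include hdeg in
lemma cs_ne (h1 : H.Adj v u₁) (i : ℕ) : cs H v u₁ (i+1) ≠ cs H v u₁ i :=
  fun h => (G.ne_of_adj (H.adj_sub (cs_adj H v u₁ hdeg h1 i))) h.symm

include hdeg in
lemma neighbor_eq (h1 : H.Adj v u₁) (i : ℕ) :
    H.neighborSet (cs H v u₁ i) = {(sq H v u₁ i).1, cs H v u₁ (i+1)} := by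
  apply pair_eq
  · exact hdeg _ (sq_adj H v u₁ hdeg h1 i).snd_mem
  · exact (sq_adj H v u₁ hdeg h1 i).symm
  · exact cs_adj H v u₁ hdeg h1 i
  · exact (cs_succ_ne H v u₁ hdeg h1 i).symm

include hdeg in
lemma key (h1 : H.Adj v u₁) :
    ∀ j i, i < j → cs H v u₁ i = cs H v u₁ j → ∃ k, 1 ≤ k ∧ k < j ∧ cs H v u₁ k = v := by
  intro j
  induction j using Nat.strong_induction_on with
  | _ j ih =>
    intro i hij heq
    have hi2 : i + 2 ≤ j := by
      by_contra hcon
      have : j = i + 1 := by omega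
      subst this
      exact cs_ne H v u₁ hdeg h1 i heq.symm
    have hj1 : j - 1 + 1 = j := by omega
    have hadj : H.Adj (cs H v u₁ i) (cs H v u₁ (j-1)) := by
      have h := cs_adj H v u₁ hdeg h1 (j-1)
      rw [hj1] at h
      rw [heq]
      exact h.symm
    have hmem : cs H v u₁ (j-1) ∈ H.neighborSet (cs H v u₁ i) := hadj
    rw [neighbor_eq H v u₁ hdeg h1 i] at hmem
    simp only [Set.mem_insert_iff, Set.mem_singleton_iff] at hmem
    rcases hmem with h | h
    · -- cs (j-1) = (sq i).1
      rcases Nat.eq_zero_or_pos i with rfl | hi1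
      · exact ⟨j - 1, by omega, by omega, h⟩
      · have hi' : i - 1 + 1 = i := by omega
        have hfst : (sq H v u₁ i).1 = cs H v u₁ (i-1) := by
          conv_lhs => rw [← hi']
          exact sq_fst H v u₁ (i-1)
        rw [hfst] at h
        obtain ⟨k, hk1, hk2, hk3⟩ := ih (j-1) (by omega) (i-1) (by omega) h.symm
        exact ⟨k, hk1, by omega, hk3⟩
    · -- cs (j-1) = cs (i+1)
      rcases lt_trichotomy (i+1) (j-1) with hlt | heq2 | hgt
      · obtain ⟨k, hk1, hk2, hk3⟩ := ih (j-1) (by omega) (i+1) hlt h.symm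
        exact ⟨k, hk1, by omega, hk3⟩
      · have : j = i + 2 := by omega
        subst this
        have := cs_succ_ne H v u₁ hdeg h1 (i+1)
        rw [sq_fst] at this
        exact absurd heq.symm this
      · omega

include hdeg in
lemma exists_ret [Fintype V] (h1 : H.Adj v u₁) : ∃ k, 1 ≤ k ∧ cs H v u₁ k = v := by
  obtain ⟨a, b, hne, heq⟩ := Fintype.exists_ne_map_eq_of_card_lt
    (fun i : Fin (Fintype.card V + 1) => cs H v u₁ i) (by simp)
  rcases lt_or_gt_of_ne (fun h : (a:ℕ) = b => hne (Fin.ext h)) with hab | hab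
  · obtain ⟨k, hk1, _, hk3⟩ := key H v u₁ hdeg h1 b a hab heq
    exact ⟨k, hk1, hk3⟩
  · obtain ⟨k, hk1, _, hk3⟩ := key H v u₁ hdeg h1 a b hab heq.symm
    exact ⟨k, hk1, hk3⟩

noncomputable def rt : ℕ := by
  classical exact if h : ∃ k, 1 ≤ k ∧ cs H v u₁ k = v then Nat.find h else 0

include hdeg in
lemma rt_spec [Fintype V] (h1 : H.Adj v u₁) :
    1 ≤ rt H v u₁ ∧ cs H v u₁ (rt H v u₁) = v ∧
      ∀ k, 1 ≤ k → k < rt H v u₁ → cs H v u₁ k ≠ v := by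
  classical
  have hex := exists_ret H v u₁ hdeg h1
  rw [rt]
  simp only [dif_pos hex]
  refine ⟨(Nat.find_spec hex).1, (Nat.find_spec hex).2, ?_⟩
  intro k hk1 hk2 hkv
  exact Nat.find_min hex hk2 ⟨hk1, hkv⟩

include hdeg in
lemma rt_two [Fintype V] (h1 : H.Adj v u₁) : 2 ≤ rt H v u₁ := by
  obtain ⟨ht1, htv, _⟩ := rt_spec H v u₁ hdeg h1
  by_contra hcon
  have h1t : rt H v u₁ = 1 := by omega
  rw [h1t] at htv
  exact cs_succ_ne H v u₁ hdeg h1 0 htv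

include hdeg in
lemma cs_nodup [Fintype V] (h1 : H.Adj v u₁) :
    ∀ i j, i < j → j < rt H v u₁ → cs H v u₁ i ≠ cs H v u₁ j := by
  intro i j hij hjt heq
  obtain ⟨k, hk1, hk2, hk3⟩ := key H v u₁ hdeg h1 j i hij heq
  exact (rt_spec H v u₁ hdeg h1).2.2 k hk1 (lt_trans hk2 hjt) hk3

include hdeg in
lemma cs_ne_v [Fintype V] (h1 : H.Adj v u₁) : ∀ k < rt H v u₁, cs H v u₁ k ≠ v := by
  intro k hk
  rcases Nat.eq_zero_or_pos k with rfl | hk1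
  · exact fun h => (G.ne_of_adj (H.adj_sub h1)) h.symm
  · exact (rt_spec H v u₁ hdeg h1).2.2 k hk1 hk

noncomputable def encL : List V := (List.range (rt H v u₁)).map (fun j => cs H v u₁ (j+1))

include hdeg in
lemma chain_shift (h1 : H.Adj v u₁) :
    ∀ (k i : ℕ), List.Chain G.Adj (cs H v u₁ i)
      ((List.range k).map (fun j => cs H v u₁ (i+1+j))) := by
  intro k
  induction k with
  | zero => intro i; simp [List.Chain]
  | succ k ih =>
    intro i
    rw [List.range_succ_eq_map]
    simp only [List.map_cons, List.map_map]
    unfold List.Chain; rw [List.chain_cons]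
    constructor
    · have := H.adj_sub (cs_adj H v u₁ hdeg h1 i)
      simpa using this
    · have hfe : ((fun j => cs H v u₁ (i+1+j)) ∘ Nat.succ) = (fun j => cs H v u₁ ((i+1)+1+j)) := by
        funext j
        simp only [Function.comp_apply]
        congr 1
        omega
      rw [hfe]
      have := ih (i+1)
      simpa [List.Chain] using this

include hdeg in
lemma encL_chain (h1 : H.Adj v u₁) : List.Chain G.Adj u₁ (encL H v u₁) := by
  rw [encL]
  have := chain_shift H v u₁ hdeg h1 (rt H v u₁) 0
  have hfe : (fun j => cs H v u₁ (0+1+j)) = (fun j => cs H v u₁ (j+1)) := by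
    funext j; congr 1; omega
  rw [hfe] at this
  exact this

include hdeg in
lemma encL_eq [Fintype V] (h1 : H.Adj v u₁) :
    encL H v u₁ = ((List.range (rt H v u₁ - 1)).map (fun j => cs H v u₁ (j+1))) ++ [v] := by
  have h2 := rt_two H v u₁ hdeg h1
  have htv := (rt_spec H v u₁ hdeg h1).2.1
  have ht : rt H v u₁ = (rt H v u₁ - 1) + 1 := by omega
  rw [encL]
  conv_lhs => rw [ht, List.range_succ, List.map_append]
  simp only [List.map_cons, List.map_nil]
  congr 2
  rw [← ht]
  exact htv

include hdeg in
lemma rt_card_bound [Fintype V] (h1 : H.Adj v u₁) : rt H v u₁ ≤ Fintype.card V - 1 := by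
  classical
  have hinj : Set.InjOn (cs H v u₁) (Finset.range (rt H v u₁)) := by
    intro x hx y hy hxy
    simp only [Finset.coe_range, Set.mem_Iio] at hx hy
    by_contra hne
    rcases Nat.lt_or_ge x y with h | h
    · exact cs_nodup H v u₁ hdeg h1 x y h hy hxy
    · exact cs_nodup H v u₁ hdeg h1 y x (by omega) hx hxy.symm
  have hcard : ((Finset.range (rt H v u₁)).image (cs H v u₁)).card = rt H v u₁ := by
    rw [Finset.card_image_of_injOn hinj, Finset.card_range]
  have hsub : (Finset.range (rt H v u₁)).image (cs H v u₁) ⊆ Finset.univ.erase v := by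
    intro a ha
    rw [Finset.mem_image] at ha
    obtain ⟨j, hj, rfl⟩ := ha
    rw [Finset.mem_range] at hj
    rw [Finset.mem_erase]
    exact ⟨cs_ne_v H v u₁ hdeg h1 j hj, Finset.mem_univ _⟩
  have := Finset.card_le_card hsub
  rw [hcard, Finset.card_erase_of_mem (Finset.mem_univ v), Finset.card_univ] at this
  exact this

include hdeg in
lemma encL_mem [Fintype V] [DecidableEq V] [DecidableRel G.Adj] (h1 : H.Adj v u₁) :
    encL H v u₁ ∈ Wl G v (Fintype.card V - 1) u₁ ((Finset.univ.erase v).erase u₁) := by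
  have h2 := rt_two H v u₁ hdeg h1
  rw [encL_eq H v u₁ hdeg h1]
  apply mem_Wl
  · rw [← encL_eq H v u₁ hdeg h1]
    exact encL_chain H v u₁ hdeg h1
  · apply List.Nodup.map_on ?_ List.nodup_range
    intro x hx y hy hxy
    rw [List.mem_range] at hx hy
    by_contra hne
    rcases Nat.lt_or_ge x y with h | h
    · exact cs_nodup H v u₁ hdeg h1 (x+1) (y+1) (by omega) (by omega) hxy
    · exact cs_nodup H v u₁ hdeg h1 (y+1) (x+1) (by omega) (by omega) hxy.symm
  · intro a ha
    rw [List.mem_map] at ha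
    obtain ⟨j, hj, rfl⟩ := ha
    rw [List.mem_range] at hj
    rw [Finset.mem_erase, Finset.mem_erase]
    refine ⟨?_, ?_, Finset.mem_univ _⟩
    · intro h
      exact cs_nodup H v u₁ hdeg h1 0 (j+1) (by omega) (by omega) (by rw [cs_zero]; exact h.symm)
    · exact cs_ne_v H v u₁ hdeg h1 (j+1) (by omega)
  · have := rt_card_bound H v u₁ hdeg h1
    have hcard : 1 ≤ Fintype.card V := Fintype.card_pos_iff.mpr ⟨v⟩
    simp only [List.length_map, List.length_range]
    omega

include hdeg in
lemma closure [Fintype V] (h1 : H.Adj v u₁) (a b : V)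
    (ha : a = v ∨ ∃ i < rt H v u₁, cs H v u₁ i = a) (hab : H.Adj a b) :
    b = v ∨ ∃ i < rt H v u₁, cs H v u₁ i = b := by
  obtain ⟨ht1, htv, _⟩ := rt_spec H v u₁ hdeg h1
  have h2 := rt_two H v u₁ hdeg h1
  have hj1 : rt H v u₁ - 1 + 1 = rt H v u₁ := by omega
  rcases ha with ha | ⟨i, hi, hia⟩
  · rw [ha] at hab
    have hnb : H.neighborSet v = {cs H v u₁ 0, cs H v u₁ (rt H v u₁ - 1)} := by
      apply pair_eq (hdeg v h1.fst_mem)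
      · exact h1
      · have hc := cs_adj H v u₁ hdeg h1 (rt H v u₁ - 1)
        rw [hj1, htv] at hc
        exact hc.symm
      · exact cs_nodup H v u₁ hdeg h1 0 (rt H v u₁ - 1) (by omega) (by omega)
    have hb : b ∈ H.neighborSet v := hab
    rw [hnb] at hb
    rcases hb with rfl | rfl
    · exact Or.inr ⟨0, by omega, rfl⟩
    · exact Or.inr ⟨rt H v u₁ - 1, by omega, rfl⟩
  · rw [← hia] at hab
    have hb : b ∈ H.neighborSet (cs H v u₁ i) := hab
    rw [neighbor_eq H v u₁ hdeg h1 i] at hb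
    rcases hb with rfl | rfl
    · rcases Nat.eq_zero_or_pos i with rfl | hi1
      · exact Or.inl rfl
      · have hi' : i - 1 + 1 = i := by omega
        right
        refine ⟨i - 1, by omega, ?_⟩
        conv_rhs => rw [← hi']
        exact (sq_fst H v u₁ (i-1)).symm
    · rcases Nat.lt_or_ge (i+1) (rt H v u₁) with h | h
      · exact Or.inr ⟨i+1, h, rfl⟩
      · have : i + 1 = rt H v u₁ := by omega
        rw [this, htv]
        exact Or.inl rfl

include hdeg in
lemma verts_covered [Fintype V] (h1 : H.Adj v u₁) (hconn : H.coe.Connected) (u : V)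
    (hu : u ∈ H.verts) : u = v ∨ ∃ i < rt H v u₁, cs H v u₁ i = u := by
  have hvH : v ∈ H.verts := h1.fst_mem
  obtain ⟨w⟩ := hconn ⟨v, hvH⟩ ⟨u, hu⟩
  have : ∀ (a b : H.verts) (_ : H.coe.Walk a b),
      ((a : V) = v ∨ ∃ i < rt H v u₁, cs H v u₁ i = (a : V)) →
      ((b : V) = v ∨ ∃ i < rt H v u₁, cs H v u₁ i = (b : V)) := by
    intro a b w
    induction w with
    | nil => exact id
    | cons hadj p ih =>
      intro ha
      apply ih
      exact closure H v u₁ hdeg h1 _ _ ha hadj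
  exact this _ _ w (Or.inl rfl)

end Traverse

section Recon

variable {V : Type*} {G : SimpleGraph V} [Fintype V] (v u₁ : V)

lemma adj_imp (H H' : G.Subgraph)
    (hdeg : ∀ u ∈ H.verts, (H.neighborSet u).ncard = 2)
    (hdeg' : ∀ u ∈ H'.verts, (H'.neighborSet u).ncard = 2)
    (h1 : H.Adj v u₁) (h1' : H'.Adj v u₁) (hconn : H.coe.Connected)
    (hrt : rt H v u₁ = rt H' v u₁)
    (hcs : ∀ i ≤ rt H v u₁, cs H v u₁ i = cs H' v u₁ i)
    {a b : V} (hab : H.Adj a b) : H'.Adj a b := by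
  obtain ⟨ht1, htv, _⟩ := rt_spec H v u₁ hdeg h1
  have h2 := rt_two H v u₁ hdeg h1
  set t := rt H v u₁ with htdef
  have hj1 : t - 1 + 1 = t := by omega
  have hadj' : ∀ i, i + 1 ≤ t → H'.Adj (cs H v u₁ i) (cs H v u₁ (i+1)) := by
    intro i hi
    rw [hcs i (by omega), hcs (i+1) hi]
    exact cs_adj H' v u₁ hdeg' h1' i
  have haS := verts_covered H v u₁ hdeg h1 hconn a hab.fst_mem
  rcases haS with ha | ⟨i, hi, hia⟩
  · -- a = v
    rw [ha] at hab ⊢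
    have hnb : H.neighborSet v = {cs H v u₁ 0, cs H v u₁ (t - 1)} := by
      apply pair_eq (hdeg v h1.fst_mem)
      · exact h1
      · have hc := cs_adj H v u₁ hdeg h1 (t - 1)
        rw [hj1, htv] at hc
        exact hc.symm
      · exact cs_nodup H v u₁ hdeg h1 0 (t - 1) (by omega) (by omega)
    have hb : b ∈ H.neighborSet v := hab
    rw [hnb] at hb
    rcases hb with rfl | rfl
    · exact h1'
    · have := hadj' (t-1) (by omega)
      rw [hj1] at this
      have hcsv : cs H v u₁ t = v := htv
      rw [hcsv] at this
      exact this.symm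
  · rw [← hia] at hab ⊢
    have hb : b ∈ H.neighborSet (cs H v u₁ i) := hab
    rw [neighbor_eq H v u₁ hdeg h1 i] at hb
    rcases hb with rfl | rfl
    · rcases Nat.eq_zero_or_pos i with rfl | hi1
      · -- (sq 0).1 = v, a = cs 0 = u₁
        show H'.Adj (cs H v u₁ 0) (sq H v u₁ 0).1
        rw [cs_zero]
        exact h1'.symm
      · have hi' : i - 1 + 1 = i := by omega
        have := hadj' (i-1) (by omega)
        rw [hi'] at this
        have hfst : (sq H v u₁ i).1 = cs H v u₁ (i-1) := by
          conv_lhs => rw [← hi']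
          exact sq_fst H v u₁ (i-1)
        rw [hfst]
        exact this.symm
    · exact hadj' i (by omega)

lemma recon (H H' : G.Subgraph)
    (hdeg : ∀ u ∈ H.verts, (H.neighborSet u).ncard = 2)
    (hdeg' : ∀ u ∈ H'.verts, (H'.neighborSet u).ncard = 2)
    (h1 : H.Adj v u₁) (h1' : H'.Adj v u₁)
    (hconn : H.coe.Connected) (hconn' : H'.coe.Connected)
    (henc : encL H v u₁ = encL H' v u₁) : H = H' := by
  -- extract rt and cs equality
  have hrt : rt H v u₁ = rt H' v u₁ := by
    have := congrArg List.length henc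
    simpa [encL] using this
  have hcs : ∀ i ≤ rt H v u₁, cs H v u₁ i = cs H' v u₁ i := by
    intro i hi
    rcases Nat.eq_zero_or_pos i with rfl | hi1
    · rw [cs_zero, cs_zero]
    · have hj : i - 1 < rt H v u₁ := by omega
      have h := congrArg (fun l : List V => l[i-1]?) henc
      -- use getElem on mapped range
      have hL : (encL H v u₁)[i-1]? = some (cs H v u₁ i) := by
        rw [encL, List.getElem?_map]
        rw [List.getElem?_range hj]
        simp only [Option.map_some]
        have hii : i - 1 + 1 = i := by omega
        rw [hii]
      have hL' : (encL H' v u₁)[i-1]? = some (cs H' v u₁ i) := by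
        rw [encL, List.getElem?_map]
        rw [List.getElem?_range (by rw [← hrt]; exact hj)]
        simp only [Option.map_some]
        have hii : i - 1 + 1 = i := by omega
        rw [hii]
      rw [hL, hL'] at h
      exact Option.some.inj h
  apply SimpleGraph.Subgraph.ext
  · -- verts equal
    have hv1 : H.verts = {u | u = v ∨ ∃ i < rt H v u₁, cs H v u₁ i = u} := by
      apply Set.Subset.antisymm
      · intro u hu; exact verts_covered H v u₁ hdeg h1 hconn u hu
      · intro u hu
        rcases hu with rfl | ⟨i, _, rfl⟩
        · exact h1.fst_mem
        · exact (sq_adj H v u₁ hdeg h1 i).snd_mem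
    have hv2 : H'.verts = {u | u = v ∨ ∃ i < rt H' v u₁, cs H' v u₁ i = u} := by
      apply Set.Subset.antisymm
      · intro u hu; exact verts_covered H' v u₁ hdeg' h1' hconn' u hu
      · intro u hu
        rcases hu with rfl | ⟨i, _, rfl⟩
        · exact h1'.fst_mem
        · exact (sq_adj H' v u₁ hdeg' h1' i).snd_mem
    rw [hv1, hv2, ← hrt]
    ext u
    simp only [Set.mem_setOf_eq]
    constructor
    · rintro (rfl | ⟨i, hi, rfl⟩)
      · exact Or.inl rfl
      · exact Or.inr ⟨i, hi, (hcs i (by omega)).symm⟩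
    · rintro (rfl | ⟨i, hi, rfl⟩)
      · exact Or.inl rfl
      · exact Or.inr ⟨i, hi, hcs i (by omega)⟩
  · funext a b
    apply propext
    constructor
    · exact fun h => adj_imp v u₁ H H' hdeg hdeg' h1 h1' hconn hrt hcs h
    · refine fun h => adj_imp v u₁ H' H hdeg' hdeg h1' h1 hconn' hrt.symm ?_ h
      intro i hi
      exact (hcs i (by rw [hrt]; exact hi)).symm

end Recon


section TbEq

lemma Tb_eq {s n m : ℕ} (hs3 : 3 ≤ s) (hn : 3 ≤ n) (α : ℝ)
    (hα : α = (m:ℝ)/((n:ℝ)-1) - s) :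
    Tb s (n-1) m = ((s:ℝ)^(1-α) * ((s:ℝ)+1)^α)^(n-1) := by
  have hs0 : (0:ℝ) < s := sR_pos hs3
  have hn1 : (0:ℝ) < (n:ℝ)-1 := by
    have : (3:ℝ) ≤ n := by exact_mod_cast hn
    linarith
  have hq := qv_pos hs3
  have hbase : (s:ℝ)^(1-α) * ((s:ℝ)+1)^α = (s:ℝ) * (qv s)^α := by
    rw [qv, Real.div_rpow (by positivity) (le_of_lt hs0)]
    rw [Real.rpow_sub hs0, Real.rpow_one]
    ring
  rw [hbase, mul_pow]
  have h1 : ((qv s)^α)^(n-1) = (qv s)^(α * ((n-1:ℕ):ℝ)) := by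
    rw [← Real.rpow_natCast ((qv s)^α) (n-1), ← Real.rpow_mul (le_of_lt hq)]
  have hcast : ((n-1:ℕ):ℝ) = (n:ℝ) - 1 := by
    have : (1:ℕ) ≤ n := by omega
    push_cast [Nat.cast_sub this]
    ring
  have hexp : α * ((n-1:ℕ):ℝ) = (m:ℝ) - ((n-1:ℕ):ℝ) * s := by
    rw [hα, hcast]
    field_simp
  rw [h1, hexp]
  unfold Tb
  congr 1
  rw [← Real.rpow_intCast (qv s) ((m:ℤ) - (n-1:ℕ) * s)]
  congr 1
  push_cast
  ring

end TbEq

instance subgraphFinite {V : Type*} [Finite V] {G : SimpleGraph V} : Finite G.Subgraph := by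
  have hinj : Function.Injective (fun H : G.Subgraph => (H.verts, H.Adj)) := by
    intro H H' h
    simp only [Prod.mk.injEq] at h
    exact SimpleGraph.Subgraph.ext h.1 h.2
  exact Finite.of_injective _ hinj

end CycAux


/-- If `G` has `n ≥ 3` vertices, `m` edges, `m/(n-1) ≥ 3`, `s = ⌊m/(n-1)⌋`,
`α = m/(n-1) - s`, and `v` is a vertex of maximum degree, then the number of cycles
of `G` containing `v` is at most `(Δ(G)/2) (s^(1-α) (s+1)^α)^(n-1)`. -/
theorem cycles_through_max_degree_vertex_dense {V : Type*} [Fintype V] (G : SimpleGraph V)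
    [DecidableRel G.Adj] (n m : ℕ) (hn : 3 ≤ n) (hcard : Fintype.card V = n)
    (hm : G.edgeSet.ncard = m) (hge : 3 ≤ (m : ℝ) / ((n : ℝ) - 1))
    (s : ℕ) (hs : s = ⌊(m : ℝ) / ((n : ℝ) - 1)⌋₊)
    (α : ℝ) (hα : α = (m : ℝ) / ((n : ℝ) - 1) - s)
    (v : V) (hv : G.degree v = G.maxDegree) :
    ({H : G.Subgraph | H.IsCycleSub ∧ v ∈ H.verts}.ncard : ℝ) ≤
      (G.maxDegree : ℝ) / 2 * ((s : ℝ) ^ (1 - α) * ((s : ℝ) + 1) ^ α) ^ (n - 1) := by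
  classical
  letI : DecidableEq V := Classical.decEq V
  open CycAux in
  set S : Set G.Subgraph := {H | H.IsCycleSub ∧ v ∈ H.verts} with hSdef
  have hfinS : S.Finite := Set.toFinite S
  have hs3 : 3 ≤ s := by
    rw [hs]
    exact Nat.le_floor (by exact_mod_cast hge)
  -- basic data for members of S
  have hSdeg : ∀ H ∈ S, ∀ u ∈ H.verts, (H.neighborSet u).ncard = 2 := by
    intro H hH; exact hH.1.2
  have hSconn : ∀ H ∈ S, H.coe.Connected := fun H hH => hH.1.1
  have hSv : ∀ H ∈ S, (H.neighborSet v).ncard = 2 := fun H hH => hH.1.2 v hH.2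
  -- choice of the two neighbours of v in H
  let nb : G.Subgraph → V × V := fun H =>
    if h : (H.neighborSet v).ncard = 2 then
      ((Set.ncard_eq_two.mp h).choose, (Set.ncard_eq_two.mp h).choose_spec.choose)
    else (v, v)
  have nb_spec : ∀ H : G.Subgraph, (H.neighborSet v).ncard = 2 →
      (nb H).1 ≠ (nb H).2 ∧ H.neighborSet v = {(nb H).1, (nb H).2} := by
    intro H hH
    have h1 := (Set.ncard_eq_two.mp hH).choose_spec.choose_spec
    simp only [nb, dif_pos hH]
    exact h1
  have nb_adj : ∀ H ∈ S, H.Adj v (nb H).1 ∧ H.Adj v (nb H).2 := by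
    intro H hH
    have h := (nb_spec H (hSv H hH)).2
    constructor
    · have : (nb H).1 ∈ H.neighborSet v := by rw [h]; simp
      exact this
    · have : (nb H).2 ∈ H.neighborSet v := by rw [h]; simp
      exact this
  -- encoding maps
  let k0 : ℕ := Fintype.card V - 1
  let A : V → Finset V := fun u => (Finset.univ.erase v).erase u
  let e1 : G.Subgraph → V × List V := fun H => ((nb H).1, CycAux.encL H v (nb H).1)
  let e2 : G.Subgraph → V × List V := fun H => ((nb H).2, CycAux.encL H v (nb H).2)
  -- injectivity
  have hrecon : ∀ H ∈ S, ∀ H' ∈ S, ∀ u₁ : V, H.Adj v u₁ → H'.Adj v u₁ →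
      CycAux.encL H v u₁ = CycAux.encL H' v u₁ → H = H' := by
    intro H hH H' hH' u₁ h1 h1' henc
    exact CycAux.recon v u₁ H H' (hSdeg H hH) (hSdeg H' hH') h1 h1'
      (hSconn H hH) (hSconn H' hH') henc
  have hrecon' : ∀ H ∈ S, ∀ H' ∈ S, ∀ u₁ u₂ : V, H.Adj v u₁ → H'.Adj v u₂ →
      u₁ = u₂ → CycAux.encL H v u₁ = CycAux.encL H' v u₂ → H = H' := by
    intro H hH H' hH' u₁ u₂ h1 h1' hu henc
    subst hu
    exact hrecon H hH H' hH' u₁ h1 h1' henc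
  have hinj1 : Set.InjOn e1 S := by
    intro H hH H' hH' h
    simp only [e1, Prod.mk.injEq] at h
    exact hrecon' H hH H' hH' (nb H).1 (nb H').1 (nb_adj H hH).1 (nb_adj H' hH').1 h.1 h.2
  have hinj2 : Set.InjOn e2 S := by
    intro H hH H' hH' h
    simp only [e2, Prod.mk.injEq] at h
    exact hrecon' H hH H' hH' (nb H).2 (nb H').2 (nb_adj H hH).2 (nb_adj H' hH').2 h.1 h.2
  have hdisj : Disjoint (e1 '' S) (e2 '' S) := by
    rw [Set.disjoint_left]
    rintro p ⟨H, hH, rfl⟩ ⟨H', hH', hp⟩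
    have h1 : (nb H').2 = (nb H).1 := congrArg Prod.fst hp
    have h2 : CycAux.encL H' v (nb H').2 = CycAux.encL H v (nb H).1 := congrArg Prod.snd hp
    have hHeq : H' = H :=
      hrecon' H' hH' H hH (nb H').2 (nb H).1 (nb_adj H' hH').2 (nb_adj H hH).1 h1 h2
    rw [hHeq] at h1
    exact (nb_spec H (hSv H hH)).1 h1.symm
  -- the big finset
  let L : Finset (V × List V) :=
    (G.neighborFinset v).biUnion (fun u => {u} ×ˢ CycAux.Wl G v k0 u (A u))
  have hsubL : (e1 '' S ∪ e2 '' S) ⊆ ↑L := by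
    have key : ∀ H ∈ S, ∀ u₁, H.Adj v u₁ → (u₁, CycAux.encL H v u₁) ∈ L := by
      intro H hH u₁ h1
      rw [Finset.mem_biUnion]
      refine ⟨u₁, ?_, ?_⟩
      · rw [SimpleGraph.mem_neighborFinset]
        exact H.adj_sub h1
      · rw [Finset.mem_product]
        refine ⟨Finset.mem_singleton_self u₁, ?_⟩
        exact CycAux.encL_mem H v u₁ (hSdeg H hH) h1
    rintro p (⟨H, hH, rfl⟩ | ⟨H, hH, rfl⟩)
    · exact key H hH (nb H).1 (nb_adj H hH).1
    · exact key H hH (nb H).2 (nb_adj H hH).2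
  -- cardinality chain
  have hcard2 : 2 * S.ncard ≤ L.card := by
    have h1 : (e1 '' S ∪ e2 '' S).ncard = 2 * S.ncard := by
      rw [Set.ncard_union_eq hdisj (hfinS.image _) (hfinS.image _),
        Set.ncard_image_of_injOn hinj1, Set.ncard_image_of_injOn hinj2]
      ring
    rw [← h1, ← Set.ncard_coe_finset L]
    exact Set.ncard_le_ncard hsubL (L.finite_toSet)
  -- m as edgeFinset card
  have hmE : G.edgeFinset.card = m := by
    rw [← hm]
    exact (Set.ncard_eq_toFinset_card' _).symm
  -- bound L.card
  have hLbound : (L.card : ℝ) ≤ (G.degree v : ℝ) * CycAux.Tb s k0 m := by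
    have hstep : ∀ u ∈ G.neighborFinset v,
        ((CycAux.Wl G v k0 u (A u)).card : ℝ) ≤ CycAux.Tb s k0 m := by
      intro u hu
      rw [SimpleGraph.mem_neighborFinset] at hu
      have hinv1 : u ∉ A u := Finset.notMem_erase u _
      have hinv2 : u ≠ v := fun h => G.irrefl (h ▸ hu)
      have hinv3 : v ∉ A u := fun h =>
        (Finset.notMem_erase v Finset.univ) (Finset.mem_of_mem_erase h)
      refine le_trans (CycAux.Wl_card_le G v hs3 k0 u (A u) hinv1 hinv2 hinv3) ?_
      apply CycAux.Tb_mono hs3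
      rw [← hmE]
      exact CycAux.Qe_le G v u (A u)
    calc (L.card : ℝ)
        ≤ ∑ u ∈ G.neighborFinset v, (({u} ×ˢ CycAux.Wl G v k0 u (A u)).card : ℝ) := by
          exact_mod_cast Finset.card_biUnion_le
      _ = ∑ u ∈ G.neighborFinset v, ((CycAux.Wl G v k0 u (A u)).card : ℝ) := by
          apply Finset.sum_congr rfl
          intro u _
          rw [Finset.card_product, Finset.card_singleton, one_mul]
      _ ≤ ∑ _u ∈ G.neighborFinset v, CycAux.Tb s k0 m := Finset.sum_le_sum hstep
      _ = (G.degree v : ℝ) * CycAux.Tb s k0 m := by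
          rw [Finset.sum_const, nsmul_eq_mul, SimpleGraph.card_neighborFinset_eq_degree]
  -- put together
  have hk0 : k0 = n - 1 := by show Fintype.card V - 1 = n - 1; rw [hcard]
  have hTb : CycAux.Tb s (n-1) m = ((s : ℝ) ^ (1 - α) * ((s : ℝ) + 1) ^ α) ^ (n - 1) :=
    CycAux.Tb_eq hs3 hn α hα
  have hTpos : 0 < CycAux.Tb s (n-1) m := CycAux.Tb_pos hs3 _ _
  have hfinal : 2 * (S.ncard : ℝ) ≤ (G.degree v : ℝ) * CycAux.Tb s (n-1) m := by
    calc 2 * (S.ncard : ℝ) ≤ (L.card : ℝ) := by exact_mod_cast hcard2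
      _ ≤ (G.degree v : ℝ) * CycAux.Tb s k0 m := hLbound
      _ = (G.degree v : ℝ) * CycAux.Tb s (n-1) m := by rw [hk0]
  rw [← hv, ← hTb]
  linarith
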